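/- For every n ≥ 0, Σ_{p ∈ Motz_n} wt(p) = n!, the sum being over all Motzkin paths of length n. -/

import Mathlib

/-- The three kinds of steps of a Motzkin path. -/
inductive Step : Type
  | U : Step
  | D : Step
  | H : Step
deriving DecidableEq
instance : Fintype Step :=
  ⟨{Step.U, Step.D, Step.H}, fun x => by cases x <;> simp⟩
/-- Number of indices `i` with `i < m` (i.e. in the prefix of length `m`,
with 0-based indexing) at which the word `p` has the letter `s`. -/
def countIn {n : ℕ} (p : Fin n → Step) (s : Step) (m : ℕ) : ℕ :=
  (Finset.univ.filter (fun i : Fin n => (i : ℕ) < m ∧ p i = s)).card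
/-- A word `p` of length `n` over `{U, D, H}` is a Motzkin path if every
prefix contains at least as many `U`'s as `D`'s and the whole word contains
equally many `U`'s and `D`'s. -/
def IsMotzkin {n : ℕ} (p : Fin n → Step) : Prop :=
  (∀ m ≤ n, countIn p Step.D m ≤ countIn p Step.U m) ∧
  countIn p Step.U n = countIn p Step.D n
/-- The height `h_i` of step `i`: the number of `j ≤ i` with `p_j = U` minus
the number of `j ≤ i` with `p_j = D`, increased by `1` when `p_i = D`. -/
def heightAt {n : ℕ} (p : Fin n → Step) (i : Fin n) : ℕ :=
  ((Finset.univ.filter (fun j : Fin n => j ≤ i ∧ p j = Step.U)).card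
    - (Finset.univ.filter (fun j : Fin n => j ≤ i ∧ p j = Step.D)).card)
    + (if p i = Step.D then 1 else 0)
/-- The weight of a Motzkin path: the product over all steps of `h_i` for
`U` and `D` steps and of `2h_i + 1` for `H` steps. -/
def wt {n : ℕ} (p : Fin n → Step) : ℕ :=
  ∏ i : Fin n, (if p i = Step.H then 2 * heightAt p i + 1 else heightAt p i)
instance {n : ℕ} : DecidablePred (IsMotzkin (n := n)) := fun p => by
  unfold IsMotzkin countIn; infer_instance

/-! ### Auxiliary development -/

/-- `heightAt` expressed through `countIn`. -/
lemma heightAt_eq {n : ℕ} (p : Fin n → Step) (i : Fin n) :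
    heightAt p i = (countIn p Step.U ((i : ℕ) + 1) - countIn p Step.D ((i : ℕ) + 1))
      + (if p i = Step.D then 1 else 0) := by
  unfold heightAt countIn
  have h : ∀ x : Step,
      (Finset.univ.filter fun j : Fin n => j ≤ i ∧ p j = x)
        = Finset.univ.filter fun j : Fin n => (j : ℕ) < (i : ℕ) + 1 ∧ p j = x := by
    intro x
    apply Finset.filter_congr
    intro j _
    rw [Fin.le_def, Nat.lt_succ_iff]
  rw [h Step.U, h Step.D]

lemma countIn_snoc {n : ℕ} (q : Fin n → Step) (s x : Step) {m : ℕ} (hm : m ≤ n) :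
    countIn (Fin.snoc q s) x m = countIn q x m := by
  unfold countIn
  rw [Finset.card_filter, Finset.card_filter, Fin.sum_univ_castSucc]
  simp only [Fin.coe_castSucc, Fin.snoc_castSucc, Fin.val_last, Fin.snoc_last]
  rw [if_neg (fun h => absurd h.1 (by omega)), add_zero]

lemma countIn_snoc_last {n : ℕ} (q : Fin n → Step) (s x : Step) :
    countIn (Fin.snoc q s) x (n + 1) = countIn q x n + (if s = x then 1 else 0) := by
  unfold countIn
  rw [Finset.card_filter, Finset.card_filter, Fin.sum_univ_castSucc]
  simp only [Fin.coe_castSucc, Fin.snoc_castSucc, Fin.val_last, Fin.snoc_last]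
  congr 1
  · apply Finset.sum_congr rfl
    intro i _
    have h1 : (i : ℕ) < n + 1 := Nat.lt_succ_of_lt i.isLt
    simp [h1, i.isLt]
  · simp

lemma heightAt_snoc_castSucc {n : ℕ} (q : Fin n → Step) (s : Step) (i : Fin n) :
    heightAt (Fin.snoc q s) (Fin.castSucc i) = heightAt q i := by
  rw [heightAt_eq, heightAt_eq, Fin.snoc_castSucc]
  simp only [Fin.coe_castSucc]
  rw [countIn_snoc q s Step.U (Nat.succ_le_of_lt i.isLt),
    countIn_snoc q s Step.D (Nat.succ_le_of_lt i.isLt)]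

lemma heightAt_snoc_last {n : ℕ} (q : Fin n → Step) (s : Step) :
    heightAt (Fin.snoc q s) (Fin.last n)
      = (countIn q Step.U n + (if s = Step.U then 1 else 0)
          - (countIn q Step.D n + (if s = Step.D then 1 else 0)))
        + (if s = Step.D then 1 else 0) := by
  rw [heightAt_eq]
  simp only [Fin.val_last, Fin.snoc_last]
  rw [countIn_snoc_last, countIn_snoc_last]

lemma wt_snoc {n : ℕ} (q : Fin n → Step) (s : Step) :
    wt (Fin.snoc q s) = wt q *
      (if s = Step.H then 2 * heightAt (Fin.snoc q s) (Fin.last n) + 1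
        else heightAt (Fin.snoc q s) (Fin.last n)) := by
  unfold wt
  rw [Fin.prod_univ_castSucc]
  congr 1
  · exact Finset.prod_congr rfl fun i _ => by
      rw [Fin.snoc_castSucc, heightAt_snoc_castSucc]
  · rw [Fin.snoc_last]

/-- The condition of being a valid prefix ending at height `k`. -/
def Ok (n k : ℕ) (q : Fin n → Step) : Prop :=
  (∀ m ≤ n, countIn q Step.D m ≤ countIn q Step.U m) ∧
  countIn q Step.U n = countIn q Step.D n + k

instance {n k : ℕ} : DecidablePred (Ok n k) := fun q => by
  unfold Ok countIn; infer_instance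

/-- Sum of weights of all valid prefixes of length `n` ending at height `k`. -/
def S (n k : ℕ) : ℕ :=
  ∑ q ∈ Finset.univ.filter (Ok n k), wt q

lemma ok_snoc_iff {n k : ℕ} (q : Fin n → Step) (s : Step) :
    Ok (n + 1) k (Fin.snoc q s) ↔
      (∀ m ≤ n, countIn q Step.D m ≤ countIn q Step.U m) ∧
      countIn q Step.U n + (if s = Step.U then 1 else 0)
        = countIn q Step.D n + (if s = Step.D then 1 else 0) + k := by
  constructor
  · rintro ⟨h1, h2⟩
    refine ⟨fun m hm => ?_, ?_⟩
    · have := h1 m (hm.trans n.le_succ)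
      rwa [countIn_snoc q s _ hm, countIn_snoc q s _ hm] at this
    · rwa [countIn_snoc_last, countIn_snoc_last] at h2
  · rintro ⟨h1, h2⟩
    refine ⟨fun m hm => ?_, ?_⟩
    · by_cases hm' : m ≤ n
      · rw [countIn_snoc q s _ hm', countIn_snoc q s _ hm']
        exact h1 m hm'
      · have hmn : m = n + 1 := by omega
        subst hmn
        rw [countIn_snoc_last, countIn_snoc_last]
        omega
    · rw [countIn_snoc_last, countIn_snoc_last]
      exact h2

/-- Generic branch computation for the recurrence. -/
lemma branch_sum {n : ℕ} (s : Step) (k j c : ℕ)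
    (hiff : ∀ q : Fin n → Step, Ok (n + 1) k (Fin.snoc q s) ↔ Ok n j q)
    (hht : ∀ q : Fin n → Step, Ok n j q →
      (if s = Step.H then 2 * heightAt (Fin.snoc q s) (Fin.last n) + 1
        else heightAt (Fin.snoc q s) (Fin.last n)) = c) :
    (∑ q : Fin n → Step, if Ok (n + 1) k (Fin.snoc q s) then wt (Fin.snoc q s) else 0)
      = c * S n j := by
  rw [S, Finset.sum_filter, Finset.mul_sum]
  refine Finset.sum_congr rfl fun q _ => ?_
  by_cases h : Ok n j q
  · rw [if_pos ((hiff q).mpr h), if_pos h, wt_snoc, hht q h, Nat.mul_comm]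
  · rw [if_neg (fun hh => h ((hiff q).mp hh)), if_neg h, Nat.mul_zero]

lemma S_succ (n k : ℕ) :
    S (n + 1) k = k * S n (k - 1) + (2 * k + 1) * S n k + (k + 1) * S n (k + 1) := by
  have hstep : (Finset.univ : Finset Step) = {Step.U, Step.D, Step.H} := by decide
  have expand : S (n + 1) k =
      (∑ q : Fin n → Step, if Ok (n + 1) k (Fin.snoc q Step.U) then wt (Fin.snoc q Step.U) else 0)
      + (∑ q : Fin n → Step, if Ok (n + 1) k (Fin.snoc q Step.D) then wt (Fin.snoc q Step.D) else 0)
      + (∑ q : Fin n → Step, if Ok (n + 1) k (Fin.snoc q Step.H) then wt (Fin.snoc q Step.H) else 0) := by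
    rw [S, Finset.sum_filter]
    rw [← Fintype.sum_equiv (Fin.snocEquiv (fun _ => Step))
      (fun qs : Step × (Fin n → Step) =>
        if Ok (n + 1) k (Fin.snoc qs.2 qs.1) then wt (Fin.snoc qs.2 qs.1) else 0)
      (fun p => if Ok (n + 1) k p then wt p else 0) (fun qs => rfl)]
    rw [Fintype.sum_prod_type, hstep]
    rw [Finset.sum_insert (by decide), Finset.sum_insert (by decide),
      Finset.sum_singleton]
    ring
  -- D branch
  have hD : (∑ q : Fin n → Step,
      if Ok (n + 1) k (Fin.snoc q Step.D) then wt (Fin.snoc q Step.D) else 0)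
      = (k + 1) * S n (k + 1) := by
    apply branch_sum
    · intro q
      rw [ok_snoc_iff]
      unfold Ok
      simp only [reduceCtorEq, reduceIte, if_true, if_false]
      constructor
      · rintro ⟨h1, h2⟩; exact ⟨h1, by omega⟩
      · rintro ⟨h1, h2⟩; exact ⟨h1, by omega⟩
    · intro q hq
      rw [heightAt_snoc_last]
      simp only [reduceCtorEq, reduceIte, if_true, if_false]
      have h2 := hq.2
      omega
  -- H branch
  have hH : (∑ q : Fin n → Step,
      if Ok (n + 1) k (Fin.snoc q Step.H) then wt (Fin.snoc q Step.H) else 0)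
      = (2 * k + 1) * S n k := by
    apply branch_sum
    · intro q
      rw [ok_snoc_iff]
      unfold Ok
      simp only [reduceCtorEq, reduceIte, if_true, if_false]
      constructor
      · rintro ⟨h1, h2⟩; exact ⟨h1, by omega⟩
      · rintro ⟨h1, h2⟩; exact ⟨h1, by omega⟩
    · intro q hq
      rw [heightAt_snoc_last]
      simp only [reduceCtorEq, reduceIte, if_true, if_false]
      have h2 := hq.2
      omega
  -- U branch
  have hU : (∑ q : Fin n → Step,
      if Ok (n + 1) k (Fin.snoc q Step.U) then wt (Fin.snoc q Step.U) else 0)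
      = k * S n (k - 1) := by
    rcases k with _ | k'
    · -- k = 0 : the condition is never satisfied
      rw [Nat.zero_mul]
      apply Finset.sum_eq_zero
      intro q _
      rw [if_neg]
      intro hq
      rw [ok_snoc_iff] at hq
      obtain ⟨h1, h2⟩ := hq
      have := h1 n le_rfl
      simp only [reduceCtorEq, reduceIte, if_true, if_false] at h2
      omega
    · apply branch_sum
      · intro q
        rw [ok_snoc_iff]
        unfold Ok
        simp only [reduceCtorEq, reduceIte, if_true, if_false]
        constructor
        · rintro ⟨h1, h2⟩; exact ⟨h1, by omega⟩
        · rintro ⟨h1, h2⟩; exact ⟨h1, by omega⟩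
      · intro q hq
        rw [heightAt_snoc_last]
        simp only [reduceCtorEq, reduceIte, if_true, if_false]
        have h2 := hq.2
        omega
  rw [expand, hU, hD, hH]
  ring

/-- Key binomial identity. -/
lemma key_choose (n m : ℕ) :
    (m + 1) * n.choose m + (2 * m + 3) * n.choose (m + 1) + (m + 2) * n.choose (m + 2)
      = (n + 1) * (n.choose m + n.choose (m + 1)) := by
  rcases le_or_gt m n with h | h
  · obtain ⟨t, rfl⟩ := Nat.exists_eq_add_of_le h
    rcases t with _ | r
    · have hb : (m + 0).choose (m + 1) = 0 :=
        Nat.choose_eq_zero_of_lt (by omega)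
      have hc : (m + 0).choose (m + 2) = 0 :=
        Nat.choose_eq_zero_of_lt (by omega)
      simp only [Nat.add_zero] at hb hc ⊢
      rw [hb, hc, Nat.choose_self]
      ring
    · have h1 := Nat.choose_succ_right_eq (m + (r + 1)) m
      have h2 := Nat.choose_succ_right_eq (m + (r + 1)) (m + 1)
      have e1 : m + (r + 1) - m = r + 1 := by omega
      have e2 : m + (r + 1) - (m + 1) = r := by omega
      rw [e1] at h1
      rw [e2] at h2
      zify at h1 h2 ⊢
      linear_combination h1 + h2
  · have ha : n.choose m = 0 := Nat.choose_eq_zero_of_lt h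
    have hb : n.choose (m + 1) = 0 := Nat.choose_eq_zero_of_lt (by omega)
    have hc : n.choose (m + 2) = 0 := Nat.choose_eq_zero_of_lt (by omega)
    simp [ha, hb, hc]

lemma S_eq (n : ℕ) : ∀ k, S n k = n.factorial * n.choose k := by
  induction n with
  | zero =>
    intro k
    have hcount : ∀ (p : Fin 0 → Step) (x : Step) (m : ℕ), countIn p x m = 0 := by
      intro p x m
      unfold countIn
      simp
    rcases k with _ | k'
    · rw [S]
      have hfil : (Finset.univ.filter (Ok 0 0)) = (Finset.univ : Finset (Fin 0 → Step)) := by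
        apply Finset.filter_true_of_mem
        intro p _
        exact ⟨fun m hm => le_rfl.trans (by rw [hcount, hcount]), by rw [hcount, hcount]⟩
      rw [hfil]
      have : ∀ p : Fin 0 → Step, wt p = 1 := by
        intro p; unfold wt; simp
      rw [Finset.sum_congr rfl fun p _ => this p]
      simp [Finset.card_univ]
    · rw [S]
      have hfil : (Finset.univ.filter (Ok 0 (k' + 1))) = (∅ : Finset (Fin 0 → Step)) := by
        apply Finset.filter_false_of_mem
        intro p _
        intro hp
        have := hp.2
        rw [hcount, hcount] at this
        omega
      rw [hfil]
      simp [Nat.choose_eq_zero_of_lt (Nat.succ_pos k')]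
  | succ n ih =>
    intro k
    rw [S_succ, ih, ih, ih]
    rcases k with _ | m
    · simp only [Nat.zero_add, Nat.zero_sub, Nat.choose_zero_right,
        Nat.choose_one_right, Nat.factorial_succ, Nat.mul_one]
      ring
    · have hm : m + 1 - 1 = m := by omega
      rw [hm, Nat.choose_succ_succ, Nat.factorial_succ]
      calc (m + 1) * (n.factorial * n.choose m)
            + (2 * (m + 1) + 1) * (n.factorial * n.choose (m + 1))
            + (m + 1 + 1) * (n.factorial * n.choose (m + 1 + 1))
          = n.factorial * ((m + 1) * n.choose m + (2 * m + 3) * n.choose (m + 1)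
              + (m + 2) * n.choose (m + 2)) := by ring
        _ = n.factorial * ((n + 1) * (n.choose m + n.choose (m + 1))) := by
              rw [key_choose]
        _ = (n + 1) * n.factorial * (n.choose m + n.choose (m + 1)) := by ring

/-- For every `n ≥ 0`, the sum of the weights of all Motzkin paths of
length `n` equals `n!`. -/
theorem sum_wt_motzkin_eq_factorial (n : ℕ) :
    ∑ p ∈ Finset.univ.filter (fun p : Fin n → Step => IsMotzkin p), wt p
      = Nat.factorial n := by
  have h1 : (∑ p ∈ Finset.univ.filter (fun p : Fin n → Step => IsMotzkin p), wt p)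
      = S n 0 := by
    rw [S, Finset.sum_filter, Finset.sum_filter]
    refine Finset.sum_congr rfl fun p _ => ?_
    by_cases h : IsMotzkin p
    · rw [if_pos h, if_pos ⟨h.1, by rw [h.2, Nat.add_zero]⟩]
    · rw [if_neg h, if_neg (fun hp => h ⟨hp.1, by have := hp.2; omega⟩)]
  rw [h1, S_eq, Nat.choose_zero_right, Nat.mul_one]
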